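/- Let 0 < α₂ < α₁. Then the map Φ : (0,1] × (0,∞) → ℝ², Φ(r, w) = ( (2r/(α₂ w)) sin(π α₂/α₁), (1/(2w²))(2π/α₁ − (r²/α₂) sin(2π α₂/α₁)) ), is injective. -/

import Mathlib

open Real

/-- The map `(r,w) ↦ (ρ, z)` recording the radial coordinate in the `(x₂,y₂)`-plane and the
vertical coordinate of the endpoint, at the cut time `t* = 2π/(α₁ w)`, of the bi-Heisenberg
geodesic with covector parameters `r₂ = r` and `w > 0` (case `0 < α₂ < α₁`). -/
noncomputable def Phi (α₁ α₂ : ℝ) (p : ℝ × ℝ) : ℝ × ℝ :=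
  (2 * p.1 / (α₂ * p.2) * Real.sin (Real.pi * α₂ / α₁),
   1 / (2 * p.2 ^ 2) * (2 * Real.pi / α₁ - p.1 ^ 2 / α₂ * Real.sin (2 * Real.pi * α₂ / α₁)))

/-- For `0 < α₂ < α₁`, the map `Φ : (0,1] × (0,∞) → ℝ²` is injective. -/
theorem Phi_injective (α₁ α₂ : ℝ) (hα₂ : 0 < α₂) (hα : α₂ < α₁) :
    Set.InjOn (Phi α₁ α₂) (Set.Ioc (0:ℝ) 1 ×ˢ Set.Ioi (0:ℝ)) := by
  have hα₁ : 0 < α₁ := hα₂.trans hα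
  have hs : 0 < Real.sin (Real.pi * α₂ / α₁) := by
    apply Real.sin_pos_of_pos_of_lt_pi
    · positivity
    · rw [div_lt_iff₀ hα₁]
      nlinarith [Real.pi_pos]
  rintro ⟨r₁, w₁⟩ ⟨hr₁, hw₁⟩ ⟨r₂, w₂⟩ ⟨hr₂, hw₂⟩ h
  simp only [Set.mem_Ioc, Set.mem_Ioi] at hr₁ hw₁ hr₂ hw₂
  have h1 : (Phi α₁ α₂ (r₁, w₁)).1 = (Phi α₁ α₂ (r₂, w₂)).1 := by rw [h]
  have h2 : (Phi α₁ α₂ (r₁, w₁)).2 = (Phi α₁ α₂ (r₂, w₂)).2 := by rw [h]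
  simp only [Phi] at h1 h2
  have hw₁' : w₁ ≠ 0 := ne_of_gt hw₁
  have hw₂' : w₂ ≠ 0 := ne_of_gt hw₂
  have hα₂' : α₂ ≠ 0 := ne_of_gt hα₂
  have hpi := Real.pi_pos
  -- from first component: r₁ * w₂ = r₂ * w₁
  have key : r₁ * w₂ = r₂ * w₁ := by
    have h1' : 2 * r₁ / (α₂ * w₁) = 2 * r₂ / (α₂ * w₂) :=
      mul_right_cancel₀ (ne_of_gt hs) h1
    field_simp at h1'
    have h1'' : (2 * α₂) * (r₁ * w₂) = (2 * α₂) * (r₂ * w₁) := by linear_combination (2 * α₂) * h1'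
    exact mul_left_cancel₀ (by positivity) h1''
  have h2' : r₁ ^ 2 * w₂ ^ 2 = r₂ ^ 2 * w₁ ^ 2 := by
    linear_combination (r₁ * w₂ + r₂ * w₁) * key
  have hSe : α₁ * (r₁ ^ 2 * Real.sin (2 * Real.pi * α₂ / α₁)) * w₂ ^ 2
      = α₁ * (r₂ ^ 2 * Real.sin (2 * Real.pi * α₂ / α₁)) * w₁ ^ 2 := by
    linear_combination α₁ * Real.sin (2 * Real.pi * α₂ / α₁) * h2'
  field_simp at h2
  have h2c : 4 * Real.pi * α₁ * α₂ ^ 2 * w₂ ^ 2 = 4 * Real.pi * α₁ * α₂ ^ 2 * w₁ ^ 2 := by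
    linear_combination 2 * α₁ * α₂ * (h2 + hSe)
  have hsq : w₂ ^ 2 = w₁ ^ 2 :=
    mul_left_cancel₀ (by positivity : (4 * Real.pi * α₁ * α₂ ^ 2 : ℝ) ≠ 0) h2c
  have hww : w₁ = w₂ := by nlinarith [hsq, mul_pos hw₁ hw₂]
  have hrr : r₁ = r₂ := by
    rw [hww] at key
    exact mul_right_cancel₀ hw₂' key
  simp [hrr, hww]
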